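/- arXiv:1412.0441 — 4 statements merged into one kernel-verified Lean document; each statement's English description precedes it below -/
import Mathlib

section
/- Let (X, 𝒜) be a measurable space, let m be a σ-finite measure on X, and let μ₁, μ₂, μ₃ be finite signed measures on X with Lebesgue decompositions μᵢ = ρᵢ·m + μᵢˢ, where ρᵢ is the Radon–Nikodym density of the absolutely continuous part with respect to m and μᵢˢ is mutually singular with m. If for every λ ∈ ℝ the signed measure λ²μ₁ + 2λμ₂ + μ₃ is nonnegative (i.e. assigns nonnegative mass to every measurable set), then the singular parts μ₁ˢ and μ₃ˢ are nonnegative, and the densities satisfy ρ₂² ≤ ρ₁·ρ₃ m-almost everywhere. -/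
open MeasureTheory

private lemma quad_nonneg_aux {a b c : ℝ}
    (h : ∀ lam : ℝ, 0 ≤ lam ^ 2 * a + 2 * lam * b + c) :
    0 ≤ a ∧ 0 ≤ c ∧ b ^ 2 ≤ a * c := by
  have hc : 0 ≤ c := by simpa using h 0
  have hd : discrim a (2 * b) c ≤ 0 := by
    apply discrim_le_zero
    intro x
    have := h x
    nlinarith [h x]
  rw [discrim] at hd
  have hb2 : b ^ 2 ≤ a * c := by nlinarith
  refine ⟨?_, hc, hb2⟩
  by_contra ha
  push_neg at ha
  have hac : a * c ≤ 0 := mul_nonpos_of_nonpos_of_nonneg ha.le hc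
  have hb0 : b = 0 := by nlinarith [sq_nonneg b]
  have hac0 : a * c = 0 := le_antisymm hac (by nlinarith)
  have hc0 : c = 0 := (mul_eq_zero.mp hac0).resolve_left (ne_of_lt ha)
  have h1 := h 1
  rw [hb0, hc0] at h1
  simp at h1
  linarith

private lemma singularPart_nonneg_of_nonneg {X : Type*} [MeasurableSpace X]
    (m : Measure X) [SigmaFinite m] (s : SignedMeasure X) (hs : 0 ≤ s) :
    0 ≤ s.singularPart m := by
  obtain ⟨u, hu, h1, h2⟩ := s.mutuallySingular_singularPart m
  refine VectorMeasure.le_iff.mpr fun A hA => ?_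
  have hmu : m (A ∩ uᶜ) = 0 := by
    have := h2 (A ∩ uᶜ) Set.inter_subset_right
    rwa [Measure.toENNRealVectorMeasure_apply_measurable (hA.inter hu.compl)] at this
  have hsplit : s.singularPart m A
      = s.singularPart m (A ∩ u) + s.singularPart m (A ∩ uᶜ) := by
    rw [← VectorMeasure.of_union
        ((disjoint_compl_right).mono Set.inter_subset_right Set.inter_subset_right)
        (hA.inter hu) (hA.inter hu.compl), Set.inter_union_compl]
  have h1' : s.singularPart m (A ∩ u) = 0 := h1 _ Set.inter_subset_right
  have hdec := s.singularPart_add_withDensity_rnDeriv_eq m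
  have hval : s.singularPart m (A ∩ uᶜ) + m.withDensityᵥ (s.rnDeriv m) (A ∩ uᶜ)
      = s (A ∩ uᶜ) := by
    conv_rhs => rw [← hdec]
    rfl
  have hzero : m.withDensityᵥ (s.rnDeriv m) (A ∩ uᶜ) = 0 := by
    rw [withDensityᵥ_apply (SignedMeasure.integrable_rnDeriv s m) (hA.inter hu.compl)]
    exact setIntegral_measure_zero _ hmu
  have hsA : 0 ≤ s (A ∩ uᶜ) := VectorMeasure.le_iff.mp hs _ (hA.inter hu.compl)
  rw [VectorMeasure.zero_apply]
  rw [hsplit, h1', zero_add]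
  rw [hzero, add_zero] at hval
  linarith

private lemma rnDeriv_nonneg_of_nonneg {X : Type*} [MeasurableSpace X]
    (m : Measure X) [SigmaFinite m] (s : SignedMeasure X) (hs : 0 ≤ s) :
    0 ≤ᵐ[m] s.rnDeriv m := by
  obtain ⟨u, hu, h1, h2⟩ := s.mutuallySingular_singularPart m
  have hmuc : m uᶜ = 0 := by
    have := h2 uᶜ subset_rfl
    rwa [Measure.toENNRealVectorMeasure_apply_measurable hu.compl] at this
  set ρ := s.rnDeriv m with hρ
  have hmeas : MeasurableSet {x | ρ x < 0} :=
    measurableSet_lt (SignedMeasure.measurable_rnDeriv s m) measurable_const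
  set N := {x | ρ x < 0} ∩ u with hN
  have hNmeas : MeasurableSet N := hmeas.inter hu
  -- the integral of ρ over N is s N ≥ 0
  have hdec := s.singularPart_add_withDensity_rnDeriv_eq m
  have hval : s.singularPart m N + m.withDensityᵥ ρ N = s N := by
    conv_rhs => rw [← hdec]
    rw [VectorMeasure.add_apply]
  have h1' : s.singularPart m N = 0 := h1 _ Set.inter_subset_right
  have hsN : 0 ≤ s N := VectorMeasure.le_iff.mp hs _ hNmeas
  have hint : (0 : ℝ) ≤ ∫ x in N, ρ x ∂m := by
    rw [← withDensityᵥ_apply (SignedMeasure.integrable_rnDeriv s m) hNmeas]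
    rw [h1', zero_add] at hval
    rw [hval]; exact hsN
  -- but ρ < 0 on N, forcing m N = 0
  have hnn : 0 ≤ᵐ[m.restrict N] fun x => -ρ x := by
    filter_upwards [ae_restrict_mem hNmeas] with x hx
    have : ρ x < 0 := hx.1
    simp only [Pi.zero_apply]
    linarith
  have hintg : Integrable (fun x => -ρ x) (m.restrict N) :=
    ((SignedMeasure.integrable_rnDeriv s m).restrict).neg
  have hneg : ∫ x in N, -ρ x ∂m ≤ 0 := by
    rw [integral_neg]; linarith
  have hzero : (fun x => -ρ x) =ᵐ[m.restrict N] 0 :=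
    (integral_eq_zero_iff_of_nonneg_ae hnn hintg).mp
      (le_antisymm hneg (integral_nonneg_of_ae hnn))
  have hNnull : m N = 0 := by
    have h3 := hzero
    rw [Filter.EventuallyEq, ae_iff, Measure.restrict_apply₀' hNmeas.nullMeasurableSet] at h3
    refine measure_mono_null (fun x hx => ?_) h3
    refine ⟨?_, hx⟩
    have hxρ : ρ x < 0 := hx.1
    simp only [Set.mem_setOf_eq, Pi.zero_apply]
    intro hh
    linarith [neg_eq_zero.mp hh]
  have hfull : m {x | ρ x < 0} = 0 := by
    refine measure_mono_null (fun x hx => ?_) (measure_union_null hNnull hmuc)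
    by_cases hxu : x ∈ u
    · exact Or.inl ⟨hx, hxu⟩
    · exact Or.inr hxu
  rw [Filter.EventuallyLE, ae_iff]
  refine measure_mono_null (fun x hx => ?_) hfull
  simp only [Set.mem_setOf_eq, Pi.zero_apply, not_le] at hx ⊢
  exact hx

/-- **Lemma 3.1 (quadratic measure lemma).** If `λ² μ₁ + 2λ μ₂ + μ₃ ≥ 0` for every
`λ ∈ ℝ`, then the singular parts of `μ₁` and `μ₃` (with respect to a σ-finite
measure `m`) are nonnegative, and the Radon–Nikodym densities satisfy
`ρ₂² ≤ ρ₁ ρ₃` `m`-almost everywhere. -/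
theorem quadratic_signedMeasure_lemma
    {X : Type*} [MeasurableSpace X] (m : Measure X) [SigmaFinite m]
    (μ₁ μ₂ μ₃ : SignedMeasure X)
    (h : ∀ lam : ℝ, 0 ≤ lam ^ 2 • μ₁ + (2 * lam) • μ₂ + μ₃) :
    0 ≤ μ₁.singularPart m ∧ 0 ≤ μ₃.singularPart m ∧
      ∀ᵐ x ∂m, (μ₂.rnDeriv m x) ^ 2 ≤ μ₁.rnDeriv m x * μ₃.rnDeriv m x := by
  have key : ∀ A : Set X, MeasurableSet A →
      ∀ lam : ℝ, 0 ≤ lam ^ 2 * μ₁ A + 2 * lam * μ₂ A + μ₃ A := by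
    intro A hA lam
    have h2 := VectorMeasure.le_iff.mp (h lam) A hA
    simp only [VectorMeasure.add_apply, VectorMeasure.smul_apply, smul_eq_mul,
      VectorMeasure.zero_apply] at h2
    linarith
  have hq : ∀ A : Set X, MeasurableSet A →
      0 ≤ μ₁ A ∧ 0 ≤ μ₃ A ∧ (μ₂ A) ^ 2 ≤ μ₁ A * μ₃ A :=
    fun A hA => quad_nonneg_aux (key A hA)
  have hμ₁ : 0 ≤ μ₁ := VectorMeasure.le_iff.mpr fun i hi => by
    simpa using (hq i hi).1
  have hμ₃ : 0 ≤ μ₃ := VectorMeasure.le_iff.mpr fun i hi => by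
    simpa using (hq i hi).2.1
  refine ⟨singularPart_nonneg_of_nonneg m μ₁ hμ₁,
    singularPart_nonneg_of_nonneg m μ₃ hμ₃, ?_⟩
  -- a.e. inequality for the densities
  have hae : ∀ q : ℚ, ∀ᵐ x ∂m, 0 ≤ (q : ℝ) ^ 2 * μ₁.rnDeriv m x
      + 2 * (q : ℝ) * μ₂.rnDeriv m x + μ₃.rnDeriv m x := by
    intro q
    set ν : SignedMeasure X := (q : ℝ) ^ 2 • μ₁ + (2 * (q : ℝ)) • μ₂ + μ₃ with hν
    have hνpos : 0 ≤ ν := h (q : ℝ)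
    have hd := rnDeriv_nonneg_of_nonneg m ν hνpos
    have ha := SignedMeasure.rnDeriv_add ((q : ℝ) ^ 2 • μ₁ + (2 * (q : ℝ)) • μ₂) μ₃ m
    have hb := SignedMeasure.rnDeriv_add ((q : ℝ) ^ 2 • μ₁) ((2 * (q : ℝ)) • μ₂) m
    have hc := SignedMeasure.rnDeriv_smul μ₁ m ((q : ℝ) ^ 2)
    have hd2 := SignedMeasure.rnDeriv_smul μ₂ m (2 * (q : ℝ))
    filter_upwards [hd, ha, hb, hc, hd2] with x h0 h1 h2 h3 h4
    simp only [Pi.add_apply, Pi.smul_apply, smul_eq_mul, Pi.zero_apply] at *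
    rw [h1, h2, h3, h4] at h0
    linarith
  have hall : ∀ᵐ x ∂m, ∀ q : ℚ, 0 ≤ (q : ℝ) ^ 2 * μ₁.rnDeriv m x
      + 2 * (q : ℝ) * μ₂.rnDeriv m x + μ₃.rnDeriv m x := ae_all_iff.mpr hae
  filter_upwards [hall] with x hx
  set a := μ₁.rnDeriv m x
  set b := μ₂.rnDeriv m x
  set c := μ₃.rnDeriv m x
  have hreal : ∀ lam : ℝ, 0 ≤ lam ^ 2 * a + 2 * lam * b + c := by
    intro lam
    have hg : Continuous fun t : ℝ => t ^ 2 * a + 2 * t * b + c := by continuity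
    have hclosed : IsClosed {t : ℝ | 0 ≤ t ^ 2 * a + 2 * t * b + c} :=
      isClosed_le continuous_const hg
    have hsub : Set.range ((↑) : ℚ → ℝ) ⊆ {t : ℝ | 0 ≤ t ^ 2 * a + 2 * t * b + c} := by
      rintro _ ⟨q, rfl⟩
      exact hx q
    exact hclosed.closure_subset_iff.mpr hsub (Rat.denseRange_cast lam)
  exact (quad_nonneg_aux hreal).2.2
end

section
/- Let (X, 𝒜) be a measurable space and let μ₁, μ₂, μ₃ be finite signed measures on X such that for every λ ∈ ℝ the signed measure λ²μ₁ + 2λμ₂ + μ₃ is nonnegative. Then for every bounded measurable function φ : X → ℝ and every measurable set A one has ∫_A φ² dμ₁ + 2∫_A φ dμ₂ + μ₃(A) ≥ 0. -/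
open MeasureTheory

/-- Integral of a real-valued function on a measurable set `A` against a finite
signed measure, defined via the Jordan decomposition. -/
noncomputable def SignedMeasure.integralOn {X : Type*} [MeasurableSpace X]
    (μ : SignedMeasure X) (A : Set X) (f : X → ℝ) : ℝ :=
  (∫ x in A, f x ∂μ.toJordanDecomposition.posPart) -
    (∫ x in A, f x ∂μ.toJordanDecomposition.negPart)

open scoped ENNReal NNReal

namespace QuadLocAux

variable {X : Type*} [MeasurableSpace X]

lemma signedMeasure_apply_eq (t : SignedMeasure X) {B : Set X} (hB : MeasurableSet B) :
    t B = (t.toJordanDecomposition.posPart B).toReal -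
      (t.toJordanDecomposition.negPart B).toReal := by
  conv_lhs => rw [← t.toSignedMeasure_toJordanDecomposition]
  exact Measure.toSignedMeasure_sub_apply hB

lemma bdd_integrable (m : Measure X) [IsFiniteMeasure m] {g : X → ℝ} (hgm : Measurable g)
    {C : ℝ} (hgb : ∀ x, |g x| ≤ C) : Integrable g m :=
  (integrable_const C).mono' hgm.aestronglyMeasurable
    (Filter.Eventually.of_forall fun x => by simpa [Real.norm_eq_abs] using hgb x)

lemma lint_ofReal_ne_top {ν : Measure X} {f : X → ℝ} (hfi : Integrable f ν) (B : Set X) :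
    ∫⁻ x in B, ENNReal.ofReal (f x) ∂ν ≠ ∞ := by
  refine ne_of_lt (lt_of_le_of_lt ?_ hfi.2)
  refine le_trans (setLIntegral_le_lintegral _ _) (lintegral_mono fun x => ?_)
  rw [← ofReal_norm, Real.norm_eq_abs]
  exact ENNReal.ofReal_le_ofReal (le_abs_self _)

lemma integralOn_withDensityᵥ (ν : Measure X) [IsFiniteMeasure ν]
    {f : X → ℝ} (hfm : Measurable f) (hfi : Integrable f ν)
    {g : X → ℝ} (hgm : Measurable g) {C : ℝ} (hgb : ∀ x, |g x| ≤ C)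
    {A : Set X} (hA : MeasurableSet A) :
    SignedMeasure.integralOn (ν.withDensityᵥ f) A g = ∫ x in A, g x * f x ∂ν := by
  have hofReal : ∀ r : ℝ, ENNReal.ofReal r = ((r.toNNReal : ℝ≥0) : ℝ≥0∞) := fun _ => rfl
  set p := (SignedMeasure.toJordanDecomposition (ν.withDensityᵥ f)).posPart with hp
  set n := (SignedMeasure.toJordanDecomposition (ν.withDensityᵥ f)).negPart with hn
  haveI : IsFiniteMeasure p := (SignedMeasure.toJordanDecomposition (ν.withDensityᵥ f)).posPart_finite
  haveI : IsFiniteMeasure n := (SignedMeasure.toJordanDecomposition (ν.withDensityᵥ f)).negPart_finite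
  haveI : IsFiniteMeasure (ν.withDensity fun x => ENNReal.ofReal (f x)) :=
    isFiniteMeasure_withDensity (by simpa using lint_ofReal_ne_top hfi Set.univ)
  haveI : IsFiniteMeasure (ν.withDensity fun x => ENNReal.ofReal (-f x)) :=
    isFiniteMeasure_withDensity (by simpa using lint_ofReal_ne_top hfi.neg Set.univ)
  have hkey : p + ν.withDensity (fun x => ENNReal.ofReal (-f x)) =
      n + ν.withDensity (fun x => ENNReal.ofReal (f x)) := by
    ext B hB
    have h1 : (p B).toReal - (n B).toReal = ∫ x in B, f x ∂ν := by
      rw [← withDensityᵥ_apply hfi hB]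
      exact (signedMeasure_apply_eq _ hB).symm
    have h2 : ∫ x in B, f x ∂ν = (∫⁻ x in B, ENNReal.ofReal (f x) ∂ν).toReal -
        (∫⁻ x in B, ENNReal.ofReal (-f x) ∂ν).toReal :=
      integral_eq_lintegral_pos_part_sub_lintegral_neg_part hfi.restrict
    have hfp : ∫⁻ x in B, ENNReal.ofReal (f x) ∂ν ≠ ∞ := lint_ofReal_ne_top hfi B
    have hfn : ∫⁻ x in B, ENNReal.ofReal (-f x) ∂ν ≠ ∞ := lint_ofReal_ne_top hfi.neg B
    simp only [Measure.add_apply, withDensity_apply _ hB]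
    refine (ENNReal.toReal_eq_toReal_iff' ?_ ?_).mp ?_
    · exact ENNReal.add_ne_top.mpr ⟨measure_ne_top p B, hfn⟩
    · exact ENNReal.add_ne_top.mpr ⟨measure_ne_top n B, hfp⟩
    · rw [ENNReal.toReal_add (measure_ne_top p B) hfn,
        ENNReal.toReal_add (measure_ne_top n B) hfp]
      linarith [h1, h2.symm]
  have hgnorm : ∀ x, ‖g x‖ ≤ C := fun x => by rw [Real.norm_eq_abs]; exact hgb x
  have hgint : ∀ (m : Measure X) [IsFiniteMeasure m], Integrable g (m.restrict A) :=
    fun m _ => bdd_integrable _ hgm hgb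
  have e1 : (∫ x in A, g x ∂p) + ∫ x in A, g x ∂(ν.withDensity fun x => ENNReal.ofReal (-f x)) =
      (∫ x in A, g x ∂n) + ∫ x in A, g x ∂(ν.withDensity fun x => ENNReal.ofReal (f x)) := by
    rw [← integral_add_measure (hgint _) (hgint _), ← integral_add_measure (hgint _) (hgint _),
      ← Measure.restrict_add, ← Measure.restrict_add, hkey]
  have e2 : ∫ x in A, g x ∂(ν.withDensity fun x => ENNReal.ofReal (f x)) =
      ∫ x in A, ((f x).toNNReal : ℝ) * g x ∂ν := by
    simp only [hofReal]
    rw [restrict_withDensity hA, integral_withDensity_eq_integral_smul hfm.real_toNNReal]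
    simp [NNReal.smul_def]
  have e3 : ∫ x in A, g x ∂(ν.withDensity fun x => ENNReal.ofReal (-f x)) =
      ∫ x in A, (((-f x).toNNReal : ℝ)) * g x ∂ν := by
    simp only [hofReal]
    rw [restrict_withDensity hA, integral_withDensity_eq_integral_smul (f := fun x => (-f x).toNNReal) hfm.neg.real_toNNReal]
    simp [NNReal.smul_def]
  have hi1 : Integrable (fun x => ((f x).toNNReal : ℝ) * g x) (ν.restrict A) := by
    simp only [Real.coe_toNNReal']
    exact (Integrable.bdd_mul hfi.pos_part.restrict hgm.aestronglyMeasurable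
      (Filter.Eventually.of_forall hgnorm)).congr (Filter.Eventually.of_forall fun x => mul_comm _ _)
  have hi2 : Integrable (fun x => (((-f x).toNNReal : ℝ)) * g x) (ν.restrict A) := by
    simp only [Real.coe_toNNReal']
    exact (Integrable.bdd_mul hfi.neg_part.restrict hgm.aestronglyMeasurable
      (Filter.Eventually.of_forall hgnorm)).congr (Filter.Eventually.of_forall fun x => mul_comm _ _)
  have hpt : ∀ x, g x * f x = ((f x).toNNReal : ℝ) * g x - (((-f x).toNNReal : ℝ)) * g x := by
    intro x
    rw [Real.coe_toNNReal', Real.coe_toNNReal']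
    rcases le_total 0 (f x) with hx | hx
    · rw [max_eq_left hx, max_eq_right (neg_nonpos.mpr hx)]; ring
    · rw [max_eq_right hx, max_eq_left (neg_nonneg.mpr hx)]; ring
  have e4 : ∫ x in A, g x * f x ∂ν =
      (∫ x in A, ((f x).toNNReal : ℝ) * g x ∂ν) -
        ∫ x in A, (((-f x).toNNReal : ℝ)) * g x ∂ν := by
    rw [← integral_sub hi1 hi2]
    exact integral_congr_ae (Filter.Eventually.of_forall fun x => hpt x)
  rw [SignedMeasure.integralOn]
  linarith [e1, e2, e3, e4]

lemma ae_nonneg_of_nonneg (ν : Measure X) [IsFiniteMeasure ν] {f : X → ℝ}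
    (hfi : Integrable f ν) (hs : 0 ≤ ν.withDensityᵥ f) : 0 ≤ᵐ[ν] f := by
  refine ae_nonneg_of_forall_setIntegral_nonneg hfi fun B hB _ => ?_
  have := VectorMeasure.le_iff.mp hs B hB
  rwa [VectorMeasure.zero_apply, withDensityᵥ_apply hfi hB] at this

end QuadLocAux

open QuadLocAux in
/-- **Localization of the quadratic hypothesis.** If `λ² μ₁ + 2λ μ₂ + μ₃ ≥ 0` for every
`λ ∈ ℝ`, then for every bounded measurable `φ : X → ℝ` and every measurable set `A`,
`∫_A φ² dμ₁ + 2 ∫_A φ dμ₂ + μ₃(A) ≥ 0`. -/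
theorem quadratic_signedMeasure_localization
    {X : Type*} [MeasurableSpace X] (μ₁ μ₂ μ₃ : SignedMeasure X)
    (h : ∀ lam : ℝ, 0 ≤ lam ^ 2 • μ₁ + (2 * lam) • μ₂ + μ₃) :
    ∀ (φ : X → ℝ), Measurable φ → (∃ C : ℝ, ∀ x, |φ x| ≤ C) →
      ∀ (A : Set X), MeasurableSet A →
        0 ≤ SignedMeasure.integralOn μ₁ A (fun x => φ x ^ 2) +
            2 * SignedMeasure.integralOn μ₂ A φ + μ₃ A := by
  rintro φ hφm ⟨C, hC⟩ A hA
  haveI h₁fin : IsFiniteMeasure μ₁.totalVariation := by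
    unfold SignedMeasure.totalVariation
    haveI := μ₁.toJordanDecomposition.posPart_finite
    haveI := μ₁.toJordanDecomposition.negPart_finite
    infer_instance
  haveI h₂fin : IsFiniteMeasure μ₂.totalVariation := by
    unfold SignedMeasure.totalVariation
    haveI := μ₂.toJordanDecomposition.posPart_finite
    haveI := μ₂.toJordanDecomposition.negPart_finite
    infer_instance
  haveI h₃fin : IsFiniteMeasure μ₃.totalVariation := by
    unfold SignedMeasure.totalVariation
    haveI := μ₃.toJordanDecomposition.posPart_finite
    haveI := μ₃.toJordanDecomposition.negPart_finite
    infer_instance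
  set ν : Measure X := μ₁.totalVariation + μ₂.totalVariation + μ₃.totalVariation with hνdef
  haveI : IsFiniteMeasure ν := by rw [hνdef]; infer_instance
  have hac : ∀ μ : SignedMeasure X, μ.totalVariation ≤ ν → μ ≪ᵥ ν.toENNRealVectorMeasure := by
    intro μ hle
    rw [SignedMeasure.absolutelyContinuous_ennreal_iff,
      VectorMeasure.ennrealToMeasure_toENNRealVectorMeasure]
    exact Measure.absolutelyContinuous_of_le hle
  have h₁ : μ₁ ≪ᵥ ν.toENNRealVectorMeasure := hac μ₁ (by
    rw [hνdef]; exact Measure.le_add_right (Measure.le_add_right le_rfl))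
  have h₂ : μ₂ ≪ᵥ ν.toENNRealVectorMeasure := hac μ₂ (by
    rw [hνdef]; exact Measure.le_add_right (Measure.le_add_left le_rfl))
  have h₃ : μ₃ ≪ᵥ ν.toENNRealVectorMeasure := hac μ₃ (by
    rw [hνdef]; exact Measure.le_add_left le_rfl)
  set f₁ := μ₁.rnDeriv ν with hf₁def
  set f₂ := μ₂.rnDeriv ν with hf₂def
  set f₃ := μ₃.rnDeriv ν with hf₃def
  have hm₁ : Measurable f₁ := SignedMeasure.measurable_rnDeriv μ₁ ν
  have hm₂ : Measurable f₂ := SignedMeasure.measurable_rnDeriv μ₂ ν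
  have hm₃ : Measurable f₃ := SignedMeasure.measurable_rnDeriv μ₃ ν
  have hfi₁ : Integrable f₁ ν := SignedMeasure.integrable_rnDeriv μ₁ ν
  have hfi₂ : Integrable f₂ ν := SignedMeasure.integrable_rnDeriv μ₂ ν
  have hfi₃ : Integrable f₃ ν := SignedMeasure.integrable_rnDeriv μ₃ ν
  have hw₁ : ν.withDensityᵥ f₁ = μ₁ := SignedMeasure.withDensityᵥ_rnDeriv_eq μ₁ ν h₁
  have hw₂ : ν.withDensityᵥ f₂ = μ₂ := SignedMeasure.withDensityᵥ_rnDeriv_eq μ₂ ν h₂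
  have hw₃ : ν.withDensityᵥ f₃ = μ₃ := SignedMeasure.withDensityᵥ_rnDeriv_eq μ₃ ν h₃
  -- a.e. nonnegativity of the quadratic for each real coefficient
  have key : ∀ lam : ℝ, 0 ≤ᵐ[ν] fun x => lam ^ 2 * f₁ x + 2 * lam * f₂ x + f₃ x := by
    intro lam
    have hint : Integrable (fun x => lam ^ 2 * f₁ x + 2 * lam * f₂ x + f₃ x) ν :=
      ((hfi₁.const_mul _).add (hfi₂.const_mul _)).add hfi₃
    refine ae_nonneg_of_nonneg ν hint ?_
    have heq : ν.withDensityᵥ (fun x => lam ^ 2 * f₁ x + 2 * lam * f₂ x + f₃ x) =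
        lam ^ 2 • μ₁ + (2 * lam) • μ₂ + μ₃ := by
      have hfun : (fun x => lam ^ 2 * f₁ x + 2 * lam * f₂ x + f₃ x) =
          ((lam ^ 2) • f₁ + (2 * lam) • f₂ + f₃) := by
        funext x; simp only [Pi.add_apply, Pi.smul_apply, smul_eq_mul]
      rw [hfun, withDensityᵥ_add ((hfi₁.smul (lam ^ 2)).add (hfi₂.smul (2 * lam))) hfi₃,
        withDensityᵥ_add (hfi₁.smul (lam ^ 2)) (hfi₂.smul (2 * lam)),
        withDensityᵥ_smul f₁ (lam ^ 2), withDensityᵥ_smul f₂ (2 * lam), hw₁, hw₂, hw₃]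
    rw [heq]
    exact h lam
  have keyQ : ∀ᵐ x ∂ν, ∀ q : ℚ, 0 ≤ (q : ℝ) ^ 2 * f₁ x + 2 * (q : ℝ) * f₂ x + f₃ x :=
    ae_all_iff.mpr fun q => key (q : ℝ)
  have keyR : ∀ᵐ x ∂ν, ∀ t : ℝ, 0 ≤ t ^ 2 * f₁ x + 2 * t * f₂ x + f₃ x := by
    filter_upwards [keyQ] with x hx
    intro t
    have hcont : Continuous fun t : ℝ => t ^ 2 * f₁ x + 2 * t * f₂ x + f₃ x := by continuity
    have hclosed : IsClosed {t : ℝ | 0 ≤ t ^ 2 * f₁ x + 2 * t * f₂ x + f₃ x} :=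
      isClosed_le continuous_const hcont
    have hsub : Set.range ((↑) : ℚ → ℝ) ⊆ {t : ℝ | 0 ≤ t ^ 2 * f₁ x + 2 * t * f₂ x + f₃ x} := by
      rintro _ ⟨q, rfl⟩; exact hx q
    have hdense : Dense (Set.range ((↑) : ℚ → ℝ)) := Rat.denseRange_cast
    have : (Set.univ : Set ℝ) ⊆ {t : ℝ | 0 ≤ t ^ 2 * f₁ x + 2 * t * f₂ x + f₃ x} := by
      rw [← hdense.closure_eq]
      exact closure_minimal hsub hclosed
    exact this (Set.mem_univ t)
  have keyφ : ∀ᵐ x ∂ν, 0 ≤ φ x ^ 2 * f₁ x + 2 * (φ x * f₂ x) + f₃ x := by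
    filter_upwards [keyR] with x hx
    have := hx (φ x); linarith
  -- rewrite the goal via densities
  have hφ2b : ∀ x, |φ x ^ 2| ≤ C ^ 2 := fun x => by
    rw [abs_pow]
    exact pow_le_pow_left₀ (abs_nonneg _) (hC x) 2
  rw [← hw₁, ← hw₂, ← hw₃,
    integralOn_withDensityᵥ ν hm₁ hfi₁ (hφm.pow_const 2) hφ2b hA,
    integralOn_withDensityᵥ ν hm₂ hfi₂ hφm hC hA,
    withDensityᵥ_apply hfi₃ hA]
  have hCnorm : ∀ x, ‖φ x‖ ≤ C := fun x => by rw [Real.norm_eq_abs]; exact hC x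
  have hi1 : Integrable (fun x => φ x ^ 2 * f₁ x) (ν.restrict A) :=
    Integrable.bdd_mul hfi₁.restrict (hφm.pow_const 2).aestronglyMeasurable
      (Filter.Eventually.of_forall fun x => by rw [Real.norm_eq_abs]; exact hφ2b x)
  have hi2 : Integrable (fun x => φ x * f₂ x) (ν.restrict A) :=
    Integrable.bdd_mul hfi₂.restrict hφm.aestronglyMeasurable (Filter.Eventually.of_forall hCnorm)
  have h12 : Integrable (fun x => φ x ^ 2 * f₁ x + 2 * (φ x * f₂ x)) (ν.restrict A) :=
    hi1.add (hi2.const_mul 2)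
  have sum_eq : ∫ x in A, (φ x ^ 2 * f₁ x + 2 * (φ x * f₂ x) + f₃ x) ∂ν =
      (∫ x in A, φ x ^ 2 * f₁ x ∂ν) + 2 * (∫ x in A, φ x * f₂ x ∂ν) +
        ∫ x in A, f₃ x ∂ν := by
    rw [integral_add h12 hfi₃.restrict, integral_add hi1 (hi2.const_mul 2), integral_const_mul]
  have hnn : 0 ≤ ∫ x in A, (φ x ^ 2 * f₁ x + 2 * (φ x * f₂ x) + f₃ x) ∂ν :=
    integral_nonneg_of_ae (ae_restrict_of_ae keyφ)
  linarith [sum_eq, hnn]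
end

section
/- Let n ≥ 1 be a natural number, let N be a real number with N > n, let d be a real number, and let M and H be n×n real matrices. Then 2·trace(Mᵀ H) − ‖M‖_F² + (d − tr M)²/N ≤ ‖H‖_F² + (tr H − d)²/(N − n). -/
open Matrix

private lemma trace_sq_le (n : ℕ) (A : Matrix (Fin n) (Fin n) ℝ) :
    (trace A) ^ 2 ≤ (n : ℝ) * trace (Aᵀ * A) := by
  have h := sq_sum_le_card_mul_sum_sq (s := Finset.univ) (f := fun i : Fin n => A i i)
  simp only [Finset.card_univ, Fintype.card_fin] at h
  refine h.trans ?_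
  have hle : ∑ i : Fin n, A i i ^ 2 ≤ trace (Aᵀ * A) := by
    simp only [trace, diag, Matrix.mul_apply, transpose_apply]
    refine Finset.sum_le_sum fun i _ => ?_
    have : A i i ^ 2 ≤ ∑ j : Fin n, A j i * A j i :=
      Finset.single_le_sum (f := fun j => A j i * A j i)
        (fun j _ => mul_self_nonneg _) (Finset.mem_univ i) |>.trans_eq' (by ring)
    exact this
  calc (n : ℝ) * ∑ i : Fin n, A i i ^ 2 ≤ (n : ℝ) * trace (Aᵀ * A) := by
        exact mul_le_mul_of_nonneg_left hle (by positivity)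

private lemma frac_ineq (x y p q : ℝ) (hp : 0 < p) (hq : 0 < q) :
    (x + y) ^ 2 / (p + q) ≤ x ^ 2 / p + y ^ 2 / q := by
  rw [div_add_div _ _ hp.ne' hq.ne', div_le_div_iff₀ (by positivity) (by positivity)]
  nlinarith [sq_nonneg (x * q - y * p), hp.le, hq.le]

/-- **Matrix self-improvement inequality.** For `n × n` real matrices `M, H` (`n ≥ 1`),
a real `N > n` and a real `d`:
`2 ⟨M, H⟩_F − ‖M‖_F² + (d − tr M)²/N ≤ ‖H‖_F² + (tr H − d)²/(N − n)`. -/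
theorem matrix_self_improvement (n : ℕ) (hn : 1 ≤ n) (N : ℝ) (hN : (n : ℝ) < N)
    (d : ℝ) (M H : Matrix (Fin n) (Fin n) ℝ) :
    2 * trace (Mᵀ * H) - trace (Mᵀ * M) + (d - trace M) ^ 2 / N ≤
      trace (Hᵀ * H) + (trace H - d) ^ 2 / (N - (n : ℝ)) := by
  have hn' : (0 : ℝ) < n := by exact_mod_cast hn
  set A := H - M with hA
  have hexp : trace (Aᵀ * A) =
      trace (Hᵀ * H) - 2 * trace (Mᵀ * H) + trace (Mᵀ * M) := by
    have h1 : Aᵀ * A = Hᵀ * H - Hᵀ * M - Mᵀ * H + Mᵀ * M := by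
      simp [hA, transpose_sub, sub_mul, mul_sub]; noncomm_ring
    have h2 : trace (Hᵀ * M) = trace (Mᵀ * H) := by
      rw [← trace_transpose (Hᵀ * M), transpose_mul, transpose_transpose]
    rw [h1]
    simp only [trace_add, trace_sub, h2]
    ring
  have htr : trace A = trace H - trace M := by simp [hA]
  have hCS : (trace H - trace M) ^ 2 / (n : ℝ) ≤ trace (Aᵀ * A) := by
    rw [div_le_iff₀ hn']
    have := trace_sq_le n A
    rw [htr] at this
    linarith [this]
  have hfrac : (d - trace M) ^ 2 / N ≤
      (trace H - trace M) ^ 2 / (n : ℝ) + (trace H - d) ^ 2 / (N - n) := by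
    have h := frac_ineq (trace H - trace M) (d - trace H) (n : ℝ) (N - n) hn'
      (by linarith)
    have e1 : trace H - trace M + (d - trace H) = d - trace M := by ring
    have e2 : (n : ℝ) + (N - n) = N := by ring
    have e3 : (d - trace H) ^ 2 = (trace H - d) ^ 2 := by ring
    rw [e1, e2, e3] at h
    exact h
  linarith [hCS, hfrac, hexp]
end

section
/- Let n ≥ 1 be a natural number, let N be a real number with N > n, let d be a real number, and let H be an n×n real matrix. Then for M := H + ((tr H − d)/(N − n))·I, where I is the n×n identity matrix, equality holds: 2·trace(Mᵀ H) − ‖M‖_F² + (d − tr M)²/N = ‖H‖_F² + (tr H − d)²/(N − n). -/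
open Matrix

/-- **Sharpness of the matrix self-improvement inequality.** For an `n × n` real
matrix `H` (`n ≥ 1`), a real `N > n` and a real `d`, the choice
`M = H + ((tr H − d)/(N − n)) I` attains equality:
`2 ⟨M, H⟩_F − ‖M‖_F² + (d − tr M)²/N = ‖H‖_F² + (tr H − d)²/(N − n)`. -/
theorem matrix_self_improvement_sharp (n : ℕ) (hn : 1 ≤ n) (N : ℝ) (hN : (n : ℝ) < N)
    (d : ℝ) (H : Matrix (Fin n) (Fin n) ℝ) :
    let M : Matrix (Fin n) (Fin n) ℝ :=
      H + ((trace H - d) / (N - (n : ℝ))) • (1 : Matrix (Fin n) (Fin n) ℝ)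
    2 * trace (Mᵀ * H) - trace (Mᵀ * M) + (d - trace M) ^ 2 / N =
      trace (Hᵀ * H) + (trace H - d) ^ 2 / (N - (n : ℝ)) := by
  intro M
  have hNn : N - (n : ℝ) ≠ 0 := sub_ne_zero.2 (ne_of_gt hN)
  have hN0 : N ≠ 0 := ne_of_gt (lt_of_le_of_lt (Nat.cast_nonneg n) hN)
  simp only [M, transpose_add, transpose_smul, transpose_one, add_mul, mul_add,
    Matrix.smul_mul, Matrix.mul_smul, Matrix.one_mul, Matrix.mul_one, trace_add, trace_smul,
    trace_transpose, trace_one, smul_eq_mul, trace_smul, Fintype.card_fin]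
  field_simp
  ring
end
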